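/- For nonnegative reals r, a, c and strictly positive reals s, b, d with a/b ≥ c/d, we have (r+c)²/(s+d) ≤ max{r²/s, (r+a+c)²/(s+b+d)}. -/

import Mathlib

theorem conv_aux (u v p q : ℝ) (hp : 0 < p) (hq : 0 < q) :
    (u + v) ^ 2 / (p + q) ≤ u ^ 2 / p + v ^ 2 / q := by
  rw [div_add_div _ _ (ne_of_gt hp) (ne_of_gt hq), div_le_div_iff₀ (by linarith) (by positivity)]
  nlinarith [sq_nonneg (u * q - v * p), mul_pos hp hq]

theorem lemma_A1 (r a c s b d : ℝ) (hr : 0 ≤ r) (ha : 0 ≤ a) (hc : 0 ≤ c)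
    (hs : 0 < s) (hb : 0 < b) (hd : 0 < d) (hratio : a * d ≥ c * b) :
    (r + c) ^ 2 / (s + d) ≤ max (r ^ 2 / s) ((r + a + c) ^ 2 / (s + b + d)) := by
  set l : ℝ := d / (b + d) with hl
  have hbd : (0:ℝ) < b + d := by linarith
  have hl0 : 0 < l := div_pos hd hbd
  have hl1 : l < 1 := (div_lt_one hbd).2 (by linarith)
  have h1l : (0:ℝ) < 1 - l := by linarith
  have hy : r + c ≤ r + l * (a + c) := by
    have h1 : c ≤ l * (a + c) := by
      rw [hl, div_mul_eq_mul_div, le_div_iff₀ hbd]; nlinarith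
    linarith
  have hsd : (0:ℝ) < s + d := by linarith
  have hsbd : (0:ℝ) < s + b + d := by linarith
  have step1 : (r + c) ^ 2 / (s + d) ≤ (r + l * (a + c)) ^ 2 / (s + d) := by
    gcongr
  have hsum : (1 - l) * s + l * (s + b + d) = s + d := by
    rw [hl]; field_simp; ring
  have hsum2 : (1 - l) * r + l * (r + a + c) = r + l * (a + c) := by ring
  have step2 : (r + l * (a + c)) ^ 2 / (s + d) ≤
      (1 - l) * (r ^ 2 / s) + l * ((r + a + c) ^ 2 / (s + b + d)) := by
    have key := conv_aux ((1 - l) * r) (l * (r + a + c)) ((1 - l) * s) (l * (s + b + d))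
      (by positivity) (by positivity)
    rw [hsum, hsum2] at key
    have e1 : ((1 - l) * r) ^ 2 / ((1 - l) * s) = (1 - l) * (r ^ 2 / s) := by
      field_simp
    have e2 : (l * (r + a + c)) ^ 2 / (l * (s + b + d)) = l * ((r + a + c) ^ 2 / (s + b + d)) := by
      field_simp
    rw [e1, e2] at key
    exact key
  have step3 : (1 - l) * (r ^ 2 / s) + l * ((r + a + c) ^ 2 / (s + b + d)) ≤
      max (r ^ 2 / s) ((r + a + c) ^ 2 / (s + b + d)) := by
    set M := max (r ^ 2 / s) ((r + a + c) ^ 2 / (s + b + d)) with hM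
    have g1 : r ^ 2 / s ≤ M := le_max_left _ _
    have g2 : (r + a + c) ^ 2 / (s + b + d) ≤ M := le_max_right _ _
    nlinarith [mul_le_mul_of_nonneg_left g1 h1l.le, mul_le_mul_of_nonneg_left g2 hl0.le]
  linarith
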